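/- (Finite support of derived orders.) Let PO and RF be binary relations on the events of an event structure (the type of events may be infinite). If (a, b) ∈ Derived(PO, RF), then there exist relations S ⊆ PO and F ⊆ RF, each holding for only finitely many pairs of events, such that (a, b) ∈ Derived(S, F). -/

import Mathlib

/-- An event structure: events `E`, shared variables `V`, a variable map, and a
write predicate. Events that are not writes are reads. -/
structure EventStructure (E V : Type*) where
  var : E → V
  isWrite : E → Prop

/-- `(PO, RF)` is an event order graph over `S`: every read-from pair `(w, r)`
goes from a write to a read of the same variable. (`PO` is unconstrained.) -/
def IsEOG {E V : Type*} (S : EventStructure E V) (PO RF : E → E → Prop) : Prop :=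
  ∀ w r, RF w r → S.isWrite w ∧ ¬ S.isWrite r ∧ S.var w = S.var r

/-- `lt` is a feasible witness for the EOG `(PO, RF)`: a strict linear order
containing `PO`, containing `RF`, and such that no other write of the same
variable falls strictly between a read-from pair. -/
structure FeasibleWitness {E V : Type*} (S : EventStructure E V)
    (PO RF lt : E → E → Prop) : Prop where
  irrefl : ∀ a, ¬ lt a a
  trans : ∀ a b c, lt a b → lt b c → lt a c
  total : ∀ a b, a ≠ b → lt a b ∨ lt b a
  po : ∀ a b, PO a b → lt a b
  rf_lt : ∀ w r, RF w r → lt w r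
  rf_sep : ∀ w r, RF w r → ∀ w', S.isWrite w' → S.var w' = S.var w → w' ≠ w →
      lt w' w ∨ lt r w'

/-- The EOG `(PO, RF)` is feasible if some feasible witness exists. -/
def Feasible {E V : Type*} (S : EventStructure E V) (PO RF : E → E → Prop) : Prop :=
  ∃ lt : E → E → Prop, FeasibleWitness S PO RF lt

/-- The derived order relation: the least relation containing `PO` and `RF`
and closed under transitivity (Rule 1) and Rules 2 and 3. -/
inductive Derived {E V : Type*} (S : EventStructure E V) (PO RF : E → E → Prop) :
    E → E → Prop
  | po {a b : E} : PO a b → Derived S PO RF a b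
  | rf {a b : E} : RF a b → Derived S PO RF a b
  | trans {a b c : E} : Derived S PO RF a b → Derived S PO RF b c → Derived S PO RF a c
  | rule2 {w r w' : E} : RF w r → Derived S PO RF w' r → S.isWrite w' →
      S.var w' = S.var w → w' ≠ w → Derived S PO RF w' w
  | rule3 {w r w' : E} : RF w r → Derived S PO RF w w' → S.isWrite w' →
      S.var w' = S.var w → w' ≠ w → Derived S PO RF r w'

theorem derived_mono {E V : Type*} {S : EventStructure E V} {PO RF PO' RF' : E → E → Prop}
    {a b : E} (h : Derived S PO RF a b) (hPO : ∀ x y, PO x y → PO' x y)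
    (hRF : ∀ x y, RF x y → RF' x y) : Derived S PO' RF' a b := by
  induction h with
  | po h => exact Derived.po (hPO _ _ h)
  | rf h => exact Derived.rf (hRF _ _ h)
  | trans _ _ ih1 ih2 => exact Derived.trans ih1 ih2
  | rule2 h _ hw hv hne ih => exact Derived.rule2 (hRF _ _ h) ih hw hv hne
  | rule3 h _ hw hv hne ih => exact Derived.rule3 (hRF _ _ h) ih hw hv hne

/-- Finite support of derived orders. -/
theorem stmt_5 {E V : Type*} (S : EventStructure E V) (PO RF : E → E → Prop)
    (a b : E) (h : Derived S PO RF a b) :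
    ∃ S' F : E → E → Prop,
      (∀ x y, S' x y → PO x y) ∧ (∀ x y, F x y → RF x y) ∧
      {p : E × E | S' p.1 p.2}.Finite ∧ {p : E × E | F p.1 p.2}.Finite ∧
      Derived S S' F a b := by
  induction h with
  | @po a b hpo =>
    refine ⟨fun x y => x = a ∧ y = b, fun _ _ => False, by rintro x y ⟨rfl, rfl⟩; exact hpo,
      fun _ _ h => h.elim, ?_, ?_, Derived.po ⟨rfl, rfl⟩⟩
    · exact (Set.finite_singleton ((a, b) : E × E)).subset (by rintro ⟨x, y⟩ ⟨rfl, rfl⟩; rfl)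
    · convert Set.finite_empty; exact Set.setOf_false
  | @rf a b hrf =>
    refine ⟨fun _ _ => False, fun x y => x = a ∧ y = b, fun _ _ h => h.elim,
      by rintro x y ⟨rfl, rfl⟩; exact hrf, ?_, ?_, Derived.rf ⟨rfl, rfl⟩⟩
    · convert Set.finite_empty; exact Set.setOf_false
    · exact (Set.finite_singleton ((a, b) : E × E)).subset (by rintro ⟨x, y⟩ ⟨rfl, rfl⟩; rfl)
  | trans h1 h2 ih1 ih2 =>
    obtain ⟨S1, F1, hS1, hF1, fS1, fF1, d1⟩ := ih1
    obtain ⟨S2, F2, hS2, hF2, fS2, fF2, d2⟩ := ih2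
    refine ⟨fun x y => S1 x y ∨ S2 x y, fun x y => F1 x y ∨ F2 x y,
      fun x y h => h.elim (hS1 x y) (hS2 x y), fun x y h => h.elim (hF1 x y) (hF2 x y),
      ?_, ?_, Derived.trans (derived_mono d1 (fun _ _ => Or.inl) (fun _ _ => Or.inl))
        (derived_mono d2 (fun _ _ => Or.inr) (fun _ _ => Or.inr))⟩
    · exact (fS1.union fS2).subset (by rintro ⟨x, y⟩ (h | h) <;> [left; right] <;> exact h)
    · exact (fF1.union fF2).subset (by rintro ⟨x, y⟩ (h | h) <;> [left; right] <;> exact h)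
  | @rule2 w r w' hrf hd hw hv hne ih =>
    obtain ⟨S1, F1, hS1, hF1, fS1, fF1, d1⟩ := ih
    refine ⟨S1, fun x y => F1 x y ∨ (x = w ∧ y = r), hS1,
      (by rintro x y (h | ⟨rfl, rfl⟩); exacts [hF1 x y h, hrf]), fS1, ?_,
      Derived.rule2 (Or.inr ⟨rfl, rfl⟩)
        (derived_mono d1 (fun _ _ h => h) (fun _ _ => Or.inl)) hw hv hne⟩
    exact (fF1.union (Set.finite_singleton ((w, r) : E × E))).subset
      (by rintro ⟨x, y⟩ (h | ⟨rfl, rfl⟩); exacts [Or.inl h, Or.inr rfl])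
  | @rule3 w r w' hrf hd hw hv hne ih =>
    obtain ⟨S1, F1, hS1, hF1, fS1, fF1, d1⟩ := ih
    refine ⟨S1, fun x y => F1 x y ∨ (x = w ∧ y = r), hS1,
      (by rintro x y (h | ⟨rfl, rfl⟩); exacts [hF1 x y h, hrf]), fS1, ?_,
      Derived.rule3 (Or.inr ⟨rfl, rfl⟩)
        (derived_mono d1 (fun _ _ h => h) (fun _ _ => Or.inl)) hw hv hne⟩
    exact (fF1.union (Set.finite_singleton ((w, r) : E × E))).subset
      (by rintro ⟨x, y⟩ (h | ⟨rfl, rfl⟩); exacts [Or.inl h, Or.inr rfl])
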